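/- If F : C^op → D is a sheaf for the topology T (satisfies descent along all T-covering families), then F satisfies descent along every morphism f : X → Y that admits T-local sections. -/

import Mathlib

open CategoryTheory CategoryTheory.Limits Opposite

universe v u v' u'

variable {C : Type u} [Category.{v} C] [HasFiniteWidePullbacks C]
variable {D : Type u'} [Category.{v'} D]

/-- The cone (in `Cᵒᵖ`) on the Čech nerve of `f : X ⟶ Y`, with apex `Y`, given by the
augmentation of the Čech nerve. -/
@[simps]
noncomputable def cechCone {X Y : C} (f : X ⟶ Y) :
    Cone (Arrow.mk f).cechNerve.rightOp where
  pt := op Y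
  π :=
    { app := fun n => ((Arrow.mk f).augmentedCechNerve.hom.app (op n)).op
      naturality := fun m n g => by
        apply Quiver.Hom.unop_inj
        exact ((Arrow.mk f).augmentedCechNerve.hom.naturality g.op).symm }

/-- `f` satisfies `F`-descent: `F` applied to the augmented Čech nerve of `f` is a
limit diagram. -/
def FDescent (F : Cᵒᵖ ⥤ D) {X Y : C} (f : X ⟶ Y) : Prop :=
  Nonempty (IsLimit (F.mapCone (cechCone f)))

namespace LocalSectionsAux

open SimplexCategory

section Cosimplicial

variable {G : SimplexCategory ⥤ D}

lemma comp_map_eq_comp_map {W : D} {t : W ⟶ G.obj (mk 0)}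
    (ht : t ≫ G.map (δ (0 : Fin 2)) = t ≫ G.map (δ (1 : Fin 2)))
    {n : SimplexCategory} (u v : mk 0 ⟶ n) :
    t ≫ G.map u = t ≫ G.map v := by
  have key : ∀ i : Fin (n.len + 1), t ≫ G.map (const (mk 0) n i) =
      t ≫ G.map (const (mk 0) n 0) := by
    intro i
    have h0 : δ (1 : Fin 2) ≫ mkOfLe 0 i (Fin.zero_le i) = const (mk 0) n 0 :=
      Hom.ext_zero_left _ _
    have h1 : δ (0 : Fin 2) ≫ mkOfLe 0 i (Fin.zero_le i) = const (mk 0) n i :=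
      Hom.ext_zero_left _ _
    rw [← h0, ← h1, G.map_comp, G.map_comp, ← Category.assoc, ← Category.assoc, ht]
  rw [eq_const_of_zero u, eq_const_of_zero v]
  exact (key _).trans (key _).symm

/-- The fork at levels `[0]`, `[1]` associated to a cone over a cosimplicial object. -/
def coneFork (c : Cone G) : Fork (G.map (δ (0 : Fin 2))) (G.map (δ (1 : Fin 2))) :=
  Fork.ofι (c.π.app (mk 0)) ((c.w (δ (0 : Fin 2))).trans (c.w (δ (1 : Fin 2))).symm)

@[simp]
lemma coneFork_ι (c : Cone G) : (coneFork c).ι = c.π.app (mk 0) := rfl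

/-- Extending a fork over the two coface maps to a cone over the cosimplicial object. -/
def extendCone (s : Fork (G.map (δ (0 : Fin 2))) (G.map (δ (1 : Fin 2)))) : Cone G where
  pt := s.pt
  π :=
    { app := fun n => s.ι ≫ G.map (const (mk 0) n 0)
      naturality := fun m n g => by
        dsimp
        rw [Category.id_comp, Category.assoc, ← G.map_comp]
        exact comp_map_eq_comp_map s.condition _ _ }

@[simp]
lemma extendCone_π_app (s : Fork (G.map (δ (0 : Fin 2))) (G.map (δ (1 : Fin 2))))
    (n : SimplexCategory) : (extendCone s).π.app n = s.ι ≫ G.map (const (mk 0) n 0) := rfl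

/-- If the fork of a cone over a cosimplicial object is a limit, the cone itself is a limit. -/
noncomputable def isLimitOfConeFork (c : Cone G) (h : IsLimit (coneFork c)) : IsLimit c where
  lift s := h.lift (coneFork s)
  fac s n := by
    have h0 : h.lift (coneFork s) ≫ c.π.app (mk 0) = s.π.app (mk 0) :=
      Fork.IsLimit.lift_ι h
    rw [← c.w (const (mk 0) n 0)]
    erw [← Category.assoc, h0, s.w]
  uniq s m hm := by
    refine Fork.IsLimit.hom_ext h ?_
    have h0 : h.lift (coneFork s) ≫ c.π.app (mk 0) = s.π.app (mk 0) :=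
      Fork.IsLimit.lift_ι h
    rw [coneFork_ι]
    erw [hm]
    exact h0.symm

/-- If a cone over a cosimplicial object is a limit, then its fork is a limit. -/
noncomputable def coneForkIsLimit (c : Cone G) (h : IsLimit c) : IsLimit (coneFork c) := by
  refine Fork.IsLimit.mk _ (fun s => h.lift (extendCone s)) (fun s => ?_) (fun s m hm => ?_)
  · have h0 := h.fac (extendCone s) (mk 0)
    rw [extendCone_π_app, hom_zero_zero (const (mk 0) (mk 0) 0), G.map_id] at h0
    rw [coneFork_ι]
    exact h0.trans (Category.comp_id _)
  · refine h.uniq (extendCone s) m fun n => ?_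
    rw [coneFork_ι] at hm
    rw [extendCone_π_app, ← hm, ← c.w (const (mk 0) n 0)]
    exact (Category.assoc _ _ _).symm

end Cosimplicial

section CechFork

variable (F : Cᵒᵖ ⥤ D)

/-- The concrete Čech fork `F(B) ⟶ F(A) ⇉ F(A ×_B A)` of a morphism `g : A ⟶ B`. -/
noncomputable def cechFork {A B : C} (g : A ⟶ B) :
    Fork (F.map (pullback.snd g g).op) (F.map (pullback.fst g g).op) :=
  Fork.ofι (F.map g.op) (by
    rw [← F.map_comp, ← F.map_comp, ← op_comp, ← op_comp, pullback.condition])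

@[simp]
lemma cechFork_ι {A B : C} (g : A ⟶ B) : (cechFork F g).ι = F.map g.op := rfl

variable {A B : C} (g : A ⟶ B)

/-- Level `0` of the Čech nerve of `g` is isomorphic to `A`. -/
noncomputable def cechIso0 : (Arrow.mk g).cechNerve.obj (op (mk 0)) ≅ A where
  hom := WidePullback.π _ 0
  inv := WidePullback.lift g (fun _ => 𝟙 A) (fun _ => Category.id_comp g)
  hom_inv_id := by
    apply WidePullback.hom_ext
    · intro j
      have hj : j = 0 := Subsingleton.elim (α := Fin 1) _ _
      subst hj
      rw [Category.assoc]
      erw [WidePullback.lift_π]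
      simp
    · rw [Category.assoc]
      erw [WidePullback.lift_base]
      simp [WidePullback.π_arrow]
  inv_hom_id := WidePullback.lift_π _ _ _ _ _

/-- Level `1` of the Čech nerve of `g` is isomorphic to `pullback g g`. -/
noncomputable def cechIso1 : (Arrow.mk g).cechNerve.obj (op (mk 1)) ≅ pullback g g where
  hom := pullback.lift (WidePullback.π _ 0) (WidePullback.π _ 1)
    (by simp [WidePullback.π_arrow])
  inv := WidePullback.lift (pullback.fst g g ≫ g)
    (fun i => if i = (0 : Fin 2) then pullback.fst g g else pullback.snd g g)
    (fun i => by
      dsimp only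
      split
      · rfl
      · exact pullback.condition.symm)
  hom_inv_id := by
    apply WidePullback.hom_ext
    · intro j
      fin_cases j <;> simp
      · erw [WidePullback.lift_π]; exact pullback.lift_fst _ _ _
      · erw [WidePullback.lift_π]; exact pullback.lift_snd _ _ _
    · simp [WidePullback.π_arrow]
      erw [WidePullback.lift_base]
      rw [← Category.assoc]
      erw [pullback.lift_fst]
      exact WidePullback.π_arrow _ _
  inv_hom_id := by
    apply pullback.hom_ext <;> simp
    · erw [pullback.lift_fst, WidePullback.lift_π]; rfl
    · erw [pullback.lift_snd, WidePullback.lift_π]; rfl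

/-- The two "face" maps from level 1 to level 0 of the Čech nerve. -/
noncomputable def cechD (i : Fin 2) :
    (Arrow.mk g).cechNerve.obj (op (mk 1)) ⟶ (Arrow.mk g).cechNerve.obj (op (mk 0)) :=
  (Arrow.mk g).cechNerve.map ((δ i).op)

lemma cechD_π (i : Fin 2) (j : Fin 1) :
    cechD g i ≫ WidePullback.π _ j = WidePullback.π _ ((δ i).toOrderHom j) := by
  simp [cechD]
  exact WidePullback.lift_π _ _ _ _ _

lemma delta_zero_apply : (δ (0 : Fin 2)).toOrderHom (0 : Fin 1) = 1 := rfl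

lemma delta_one_apply : (δ (1 : Fin 2)).toOrderHom (0 : Fin 1) = 0 := rfl

lemma cechD_zero_comm : cechD g 0 ≫ (cechIso0 g).hom = (cechIso1 g).hom ≫ pullback.snd g g := by
  show cechD g 0 ≫ WidePullback.π _ 0 = _
  rw [cechD_π, delta_zero_apply]
  simp [cechIso1]
  exact (pullback.lift_snd _ _ _).symm

lemma cechD_one_comm : cechD g 1 ≫ (cechIso0 g).hom = (cechIso1 g).hom ≫ pullback.fst g g := by
  show cechD g 1 ≫ WidePullback.π _ 0 = _
  rw [cechD_π, delta_one_apply]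
  simp [cechIso1]
  exact (pullback.lift_fst _ _ _).symm

lemma cechD_zero_comm' :
    pullback.snd g g ≫ (cechIso0 g).inv = (cechIso1 g).inv ≫ cechD g 0 := by
  rw [Iso.comp_inv_eq, Category.assoc, cechD_zero_comm, ← Category.assoc, Iso.inv_hom_id,
    Category.id_comp]

lemma cechD_one_comm' :
    pullback.fst g g ≫ (cechIso0 g).inv = (cechIso1 g).inv ≫ cechD g 1 := by
  rw [Iso.comp_inv_eq, Category.assoc, cechD_one_comm, ← Category.assoc, Iso.inv_hom_id,
    Category.id_comp]

lemma cechIso0_inv_base :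
    (cechIso0 g).inv ≫ (Arrow.mk g).augmentedCechNerve.hom.app (op (mk 0)) = g := by
  simp [cechIso0, WidePullback.lift_base]
  erw [WidePullback.lift_base]

lemma cechIso0_hom_comp :
    (cechIso0 g).hom ≫ g = (Arrow.mk g).augmentedCechNerve.hom.app (op (mk 0)) := by
  simp [cechIso0, WidePullback.π_arrow]

lemma rightOp_map_eq (i : Fin 2) :
    ((Arrow.mk g).cechNerve.rightOp ⋙ F).map (δ i) = F.map (cechD g i).op := rfl

/-- Transporting limits between the abstract cosimplicial fork and the concrete Čech fork. -/
noncomputable def cechForkIsLimitOfConeFork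
    (h : IsLimit (coneFork (F.mapCone (cechCone g)))) : IsLimit (cechFork F g) := by
  refine Fork.isLimitOfIsos _ h _
    ((F.mapIso (cechIso0 g).op).symm) ((F.mapIso (cechIso1 g).op).symm) (Iso.refl _) ?_ ?_ ?_
  · show F.map (cechIso0 g).inv.op ≫ F.map (pullback.snd g g).op =
      F.map (cechD g 0).op ≫ F.map (cechIso1 g).inv.op
    rw [← F.map_comp, ← F.map_comp, ← op_comp, ← op_comp, cechD_zero_comm']
  · show F.map (cechIso0 g).inv.op ≫ F.map (pullback.fst g g).op =
      F.map (cechD g 1).op ≫ F.map (cechIso1 g).inv.op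
    rw [← F.map_comp, ← F.map_comp, ← op_comp, ← op_comp, cechD_one_comm']
  · show 𝟙 _ ≫ (cechFork F g).ι = (coneFork (F.mapCone (cechCone g))).ι ≫
      F.map (cechIso0 g).inv.op
    rw [Category.id_comp, cechFork_ι, coneFork_ι]
    show F.map g.op = F.map ((Arrow.mk g).augmentedCechNerve.hom.app (op (mk 0))).op ≫
      F.map (cechIso0 g).inv.op
    erw [← F.map_comp, ← op_comp, cechIso0_inv_base]
    rfl

/-- The converse transport. -/
noncomputable def coneForkIsLimitOfCechFork
    (h : IsLimit (cechFork F g)) : IsLimit (coneFork (F.mapCone (cechCone g))) := by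
  refine Fork.isLimitOfIsos _ h _
    (F.mapIso (cechIso0 g).op) (F.mapIso (cechIso1 g).op) (Iso.refl _) ?_ ?_ ?_
  · show F.map (cechIso0 g).hom.op ≫ F.map (cechD g 0).op =
      F.map (pullback.snd g g).op ≫ F.map (cechIso1 g).hom.op
    rw [← F.map_comp, ← F.map_comp, ← op_comp, ← op_comp, cechD_zero_comm]
  · show F.map (cechIso0 g).hom.op ≫ F.map (cechD g 1).op =
      F.map (pullback.fst g g).op ≫ F.map (cechIso1 g).hom.op
    rw [← F.map_comp, ← F.map_comp, ← op_comp, ← op_comp, cechD_one_comm]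
  · show 𝟙 _ ≫ (coneFork (F.mapCone (cechCone g))).ι = (cechFork F g).ι ≫
      F.map (cechIso0 g).hom.op
    rw [Category.id_comp, cechFork_ι, coneFork_ι]
    show F.map ((Arrow.mk g).augmentedCechNerve.hom.app (op (mk 0))).op =
      F.map g.op ≫ F.map (cechIso0 g).hom.op
    rw [← F.map_comp, ← op_comp, cechIso0_hom_comp]
    rfl

lemma fDescent_iff_cechFork : FDescent F g ↔ Nonempty (IsLimit (cechFork F g)) := by
  constructor
  · rintro ⟨h⟩
    exact ⟨cechForkIsLimitOfConeFork F g (coneForkIsLimit _ h)⟩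
  · rintro ⟨h⟩
    exact ⟨isLimitOfConeFork _ (coneForkIsLimitOfCechFork F g h)⟩

end CechFork

end LocalSectionsAux

open LocalSectionsAux in
/-- if `F` is a sheaf for the topology `T` — i.e. `F` satisfies Čech
descent along `T`-covering morphisms, with `T`-coverings (`Cov`) stable under base
change — then `F` satisfies descent along every morphism `f : X ⟶ Y` admitting
`T`-local sections, i.e. such that there is a covering `φ : Ytil ⟶ Y` for which the
base change `Ytil ×_Y X → Ytil` of `f` admits a section. -/
theorem fDescent_of_admits_local_sections [HasProducts D] (F : Cᵒᵖ ⥤ D)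
    (Cov : ∀ ⦃A B : C⦄, (A ⟶ B) → Prop)
    (hCov_base_change : ∀ ⦃A B B' : C⦄ (g : A ⟶ B) (h : B' ⟶ B),
      Cov g → Cov (pullback.snd g h : pullback g h ⟶ B'))
    (hsheaf : ∀ ⦃A B : C⦄ (g : A ⟶ B), Cov g → FDescent F g)
    {X Y : C} (f : X ⟶ Y)
    (Ytil : C) (φ : Ytil ⟶ Y) (hφ : Cov φ)
    (s : Ytil ⟶ pullback f φ) (hs : s ≫ (pullback.snd f φ : pullback f φ ⟶ Ytil) = 𝟙 Ytil) :
    FDescent F f := by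
  -- the section of `f` over `Ytil`
  obtain ⟨ψ, hψ⟩ : ∃ ψ : Ytil ⟶ X, ψ ≫ f = φ :=
    ⟨s ≫ pullback.fst f φ, by
      rw [Category.assoc, pullback.condition, ← Category.assoc, hs, Category.id_comp]⟩
  -- the two limit forks we get from the sheaf condition
  obtain ⟨hφfork⟩ := (fDescent_iff_cechFork F φ).1 (hsheaf φ hφ)
  obtain ⟨hqfork⟩ := (fDescent_iff_cechFork F (pullback.snd φ f)).1
    (hsheaf (pullback.snd φ f) (hCov_base_change φ f hφ))
  rw [fDescent_iff_cechFork]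
  have hucond : ∀ t : Fork (F.map (pullback.snd f f).op) (F.map (pullback.fst f f).op),
      (t.ι ≫ F.map ψ.op) ≫ F.map (pullback.snd φ φ).op =
        (t.ι ≫ F.map ψ.op) ≫ F.map (pullback.fst φ φ).op := by
    intro t
    have hcond : t.ι ≫ F.map (pullback.snd f f).op = t.ι ≫ F.map (pullback.fst f f).op :=
      t.condition
    set m : pullback φ φ ⟶ pullback f f :=
      pullback.lift (pullback.fst φ φ ≫ ψ) (pullback.snd φ φ ≫ ψ)
        (by rw [Category.assoc, hψ, Category.assoc, hψ, pullback.condition]) with hmdef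
    have h1 : pullback.fst φ φ ≫ ψ = m ≫ pullback.fst f f := by
      rw [hmdef]; exact (pullback.lift_fst _ _ _).symm
    have h2 : pullback.snd φ φ ≫ ψ = m ≫ pullback.snd f f := by
      rw [hmdef]; exact (pullback.lift_snd _ _ _).symm
    rw [Category.assoc, Category.assoc, ← F.map_comp, ← F.map_comp, ← op_comp, ← op_comp,
      h1, h2, op_comp, op_comp, F.map_comp, F.map_comp, ← Category.assoc, ← Category.assoc,
      hcond]
  refine ⟨Fork.IsLimit.mk _
    (fun t => (Fork.IsLimit.lift' hφfork (t.ι ≫ F.map ψ.op) (hucond t)).1)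
    (fun t => ?fac) (fun t m hm => ?uniq)⟩
  case fac =>
    -- check the equality after restriction along the cover `q : Ytil ×_Y X ⟶ X`
    set l := (Fork.IsLimit.lift' hφfork (t.ι ≫ F.map ψ.op) (hucond t)).1 with hldef
    have hlift : l ≫ F.map φ.op = t.ι ≫ F.map ψ.op :=
      (Fork.IsLimit.lift' hφfork (t.ι ≫ F.map ψ.op) (hucond t)).2
    have hqf : pullback.snd φ f ≫ f = pullback.fst φ f ≫ φ := pullback.condition.symm
    set k : pullback φ f ⟶ pullback f f :=
      pullback.lift (pullback.snd φ f) (pullback.fst φ f ≫ ψ)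
        (by rw [hqf, Category.assoc, hψ]) with hkdef
    have hk1 : k ≫ pullback.fst f f = pullback.snd φ f := by
      rw [hkdef]; exact pullback.lift_fst _ _ _
    have hk2 : k ≫ pullback.snd f f = pullback.fst φ f ≫ ψ := by
      rw [hkdef]; exact pullback.lift_snd _ _ _
    have hcond : t.ι ≫ F.map (pullback.snd f f).op = t.ι ≫ F.map (pullback.fst f f).op :=
      t.condition
    refine Fork.IsLimit.hom_ext hqfork ?_
    show (l ≫ F.map f.op) ≫ F.map (pullback.snd φ f).op =
      t.ι ≫ F.map (pullback.snd φ f).op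
    calc (l ≫ F.map f.op) ≫ F.map (pullback.snd φ f).op
        = l ≫ F.map (pullback.snd φ f ≫ f).op := by
          rw [op_comp, F.map_comp]
          exact Category.assoc _ _ _
      _ = l ≫ F.map (pullback.fst φ f ≫ φ).op := by rw [hqf]
      _ = (l ≫ F.map φ.op) ≫ F.map (pullback.fst φ f).op := by
          rw [op_comp, F.map_comp]
          exact (Category.assoc _ _ _).symm
      _ = (t.ι ≫ F.map ψ.op) ≫ F.map (pullback.fst φ f).op := by rw [hlift]
      _ = t.ι ≫ F.map (pullback.fst φ f ≫ ψ).op := by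
          rw [Category.assoc, ← F.map_comp, ← op_comp]
      _ = t.ι ≫ F.map (k ≫ pullback.snd f f).op := by rw [hk2]
      _ = (t.ι ≫ F.map (pullback.snd f f).op) ≫ F.map k.op := by
          rw [op_comp, F.map_comp, Category.assoc]
      _ = (t.ι ≫ F.map (pullback.fst f f).op) ≫ F.map k.op := by rw [hcond]
      _ = t.ι ≫ F.map (k ≫ pullback.fst f f).op := by
          rw [op_comp, F.map_comp, Category.assoc]
      _ = t.ι ≫ F.map (pullback.snd φ f).op := by rw [hk1]
  case uniq =>
    -- uniqueness: restriction along `φ` is injective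
    set l := (Fork.IsLimit.lift' hφfork (t.ι ≫ F.map ψ.op) (hucond t)).1 with hldef
    have hlift : l ≫ F.map φ.op = t.ι ≫ F.map ψ.op :=
      (Fork.IsLimit.lift' hφfork (t.ι ≫ F.map ψ.op) (hucond t)).2
    have hm' : m ≫ F.map f.op = t.ι := hm
    refine Fork.IsLimit.hom_ext hφfork ?_
    show m ≫ F.map φ.op = l ≫ F.map φ.op
    calc m ≫ F.map φ.op
        = m ≫ F.map (ψ ≫ f).op := by rw [hψ]
      _ = (m ≫ F.map f.op) ≫ F.map ψ.op := by
        rw [op_comp, F.map_comp]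
        exact (Category.assoc _ _ _).symm
      _ = t.ι ≫ F.map ψ.op := by rw [hm']
      _ = l ≫ F.map φ.op := hlift.symm
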